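/- The convex hull of the token values is nonincreasing in time with respect to set inclusion: for every k ∈ ℕ, co(Z^{k+1}) ⊆ co(Z^k). -/

import Mathlib

open scoped RealInnerProductSpace BigOperators Classical
open Filter Metric

noncomputable section

/-- The hardmax attention (argmax) index set `C_i` for a token configuration `z`
(attention matrix `A = I`): the set of indices `j` maximizing `⟪z_i, z_j⟫`. -/
def attn {d n : ℕ} (z : Fin n → EuclideanSpace ℝ (Fin d)) (i : Fin n) : Finset (Fin n) :=
  Finset.univ.filter fun j => (⟪z i, z j⟫ = ⨆ ℓ, ⟪z i, z ℓ⟫)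

/-- The pure-attention hardmax transformer dynamics with step-size `α > 0` and `A = I`:
`z_i^{k+1} = z_i^k + (α/(1+α))·(1/|C_i^k|)·Σ_{j ∈ C_i^k} (z_j^k − z_i^k)`. -/
def IsDyn {d n : ℕ} (α : ℝ) (z : ℕ → Fin n → EuclideanSpace ℝ (Fin d)) : Prop :=
  ∀ k i, z (k + 1) i = z k i +
    (α / (1 + α)) • (((attn (z k) i).card : ℝ)⁻¹ • ∑ j ∈ attn (z k) i, (z k j - z k i))

lemma attn_nonempty {d n : ℕ} (hn : 0 < n) (z : Fin n → EuclideanSpace ℝ (Fin d)) (i : Fin n) :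
    (attn z i).Nonempty := by
  have : Nonempty (Fin n) := ⟨⟨0, hn⟩⟩
  obtain ⟨j, hj⟩ := Finite.exists_max (fun ℓ => ⟪z i, z ℓ⟫)
  refine ⟨j, ?_⟩
  simp only [attn, Finset.mem_filter, Finset.mem_univ, true_and]
  exact le_antisymm (le_ciSup (f := fun ℓ => ⟪z i, z ℓ⟫) (Finite.bddAbove_range _) j)
    (ciSup_le hj)

/-- The convex hull of the token values is nonincreasing in time. -/
theorem convexHull_nonincreasing {d n : ℕ} (hd : 0 < d) (hn : 0 < n) (α : ℝ) (hα : 0 < α)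
    (z : ℕ → Fin n → EuclideanSpace ℝ (Fin d)) (hdyn : IsDyn α z) :
    ∀ k : ℕ, convexHull ℝ (Set.range (z (k + 1))) ⊆ convexHull ℝ (Set.range (z k)) := by
  intro k
  apply convexHull_min _ (convex_convexHull ℝ _)
  rintro _ ⟨i, rfl⟩
  set C := attn (z k) i with hC
  have hCne : C.Nonempty := attn_nonempty hn (z k) i
  have hm : (C.card : ℝ) ≠ 0 := Nat.cast_ne_zero.mpr (Finset.card_ne_zero.mpr hCne)
  set c : ℝ := α / (1 + α) with hc
  have h1α : (0:ℝ) < 1 + α := by linarith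
  have hc0 : 0 ≤ c := by positivity
  have hc1 : c ≤ 1 := by rw [hc, div_le_one h1α]; linarith
  have hg : (C.card : ℝ)⁻¹ • ∑ j ∈ C, z k j ∈ convexHull ℝ (Set.range (z k)) := by
    have := Finset.centerMass_mem_convexHull (t := C) (w := fun _ => (1:ℝ))
      (z := z k) (fun j _ => zero_le_one) (by simp [Finset.card_pos.mpr hCne])
      (fun j _ => Set.mem_range_self j)
    simpa [Finset.centerMass, Finset.sum_const] using this
  have key : z (k + 1) i = (1 - c) • z k i + c • ((C.card : ℝ)⁻¹ • ∑ j ∈ C, z k j) := by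
    rw [hdyn k i, Finset.sum_sub_distrib, Finset.sum_const, ← hC, ← hc]
    rw [← Nat.cast_smul_eq_nsmul ℝ, smul_sub, inv_smul_smul₀ hm, smul_sub, sub_smul, one_smul]
    abel
  rw [key]
  exact (convex_convexHull ℝ _) (subset_convexHull ℝ _ (Set.mem_range_self i)) hg
    (by linarith) hc0 (by ring)

end
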